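/- Let f be holomorphic on the strip D(ρ'') = {z ∈ ℂ : |Im z| ∈ (-ρ'', ρ'')} with sup_{|b|<ρ''} ‖f(·+ib)‖_{L²(ℝ)} =: N < ∞. Then for every ρ' < ρ'', sup_{|b|<ρ'} ‖f'(·+ib)‖_{L²(ℝ)} ≤ C N / (ρ'' - ρ') for an absolute constant C. -/

import Mathlib

open MeasureTheory Real Set
open scoped ENNReal

private lemma cauchy_ptwise {f : ℂ → ℂ} {c : ℂ} {R : ℝ} (hR : 0 < R)
    (hd : DiffContOnCl ℂ f (Metric.ball c R)) :
    ‖deriv f c‖ ≤ (2 * π * R)⁻¹ * ∫ θ in (0:ℝ)..(2*π), ‖f (circleMap c R θ)‖ := by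
  rw [show deriv f c = (2 * ↑π * Complex.I)⁻¹ • ∮ z in C(c, R), (z - c) ^ (-2 : ℤ) • f z by
    rw [eq_inv_smul_iff₀ (by simp [pi_ne_zero, Complex.I_ne_zero]),
      ← hd.deriv_eq_smul_circleIntegral hR]
    congr 1; ext z; simp [zpow_neg], norm_smul]
  have h1 : ‖(2 * ↑π * Complex.I)⁻¹‖ = (2 * π)⁻¹ := by
    simp [abs_of_nonneg pi_pos.le]
  rw [h1]
  have h2 : ‖∮ z in C(c, R), (z - c) ^ (-2 : ℤ) • f z‖
      ≤ ∫ θ in (0:ℝ)..(2*π), R⁻¹ * ‖f (circleMap c R θ)‖ := by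
    rw [circleIntegral]
    refine (intervalIntegral.norm_integral_le_integral_norm (by positivity)).trans_eq ?_
    refine intervalIntegral.integral_congr fun θ _ => ?_
    rw [norm_smul, norm_smul, deriv_circleMap, circleMap_sub_center]
    simp [norm_circleMap_zero, abs_of_nonneg hR.le, zpow_neg]
    field_simp
  calc (2*π)⁻¹ * ‖∮ z in C(c, R), (z - c) ^ (-2 : ℤ) • f z‖
      ≤ (2*π)⁻¹ * ∫ θ in (0:ℝ)..(2*π), R⁻¹ * ‖f (circleMap c R θ)‖ :=
        mul_le_mul_of_nonneg_left h2 (by positivity)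
    _ = (2 * π * R)⁻¹ * ∫ θ in (0:ℝ)..(2*π), ‖f (circleMap c R θ)‖ := by
        rw [intervalIntegral.integral_const_mul, mul_inv, mul_inv]; ring

private lemma cs_circle {G : ℝ → ℝ} (hG : Continuous G) (hGnn : ∀ θ, 0 ≤ G θ) :
    ENNReal.ofReal (∫ θ in (0:ℝ)..(2*π), G θ) ^ 2
      ≤ ENNReal.ofReal (2*π) * ∫⁻ θ in Ioc (0:ℝ) (2*π), ENNReal.ofReal (G θ ^ 2) := by
  have h2π : (0:ℝ) ≤ 2*π := by positivity
  have hint : IntegrableOn G (Ioc (0:ℝ) (2*π)) := hG.integrableOn_Ioc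
  rw [intervalIntegral.integral_of_le h2π,
    ofReal_integral_eq_lintegral_ofReal hint (ae_of_all _ hGnn)]
  set μθ := volume.restrict (Ioc (0:ℝ) (2*π)) with hμθ
  have hmeas : AEMeasurable (fun θ => ENNReal.ofReal (G θ)) μθ :=
    (ENNReal.continuous_ofReal.comp hG).aemeasurable
  have hcs := ENNReal.lintegral_mul_le_Lp_mul_Lq μθ
    (⟨by norm_num, by norm_num, by norm_num⟩ : Real.HolderConjugate 2 2) aemeasurable_const hmeas
    (f := fun _ => 1) (g := fun θ => ENNReal.ofReal (G θ))
  simp only [one_mul, Pi.mul_apply, Pi.one_apply] at hcs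
  have hrw : ∀ θ : ℝ, (ENNReal.ofReal (G θ)) ^ (2:ℝ) = ENNReal.ofReal (G θ ^ 2) := fun θ => by
    rw [show (2:ℝ) = ((2:ℕ):ℝ) by norm_num, ENNReal.rpow_natCast,
      ← ENNReal.ofReal_pow (hGnn θ)]
  have hone : ∫⁻ _θ, (1:ℝ≥0∞) ^ (2:ℝ) ∂μθ = ENNReal.ofReal (2*π) := by
    simp only [ENNReal.one_rpow, lintegral_const, one_mul, hμθ,
      Measure.restrict_apply_univ, Real.volume_Ioc, sub_zero]
  simp only [hrw, hone] at hcs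
  calc (∫⁻ θ, ENNReal.ofReal (G θ) ∂μθ) ^ 2
      ≤ (ENNReal.ofReal (2*π) ^ (1/(2:ℝ)) * (∫⁻ θ, ENNReal.ofReal (G θ ^ 2) ∂μθ) ^ (1/(2:ℝ))) ^ 2 :=
        pow_le_pow_left₀ zero_le hcs 2
    _ = ENNReal.ofReal (2*π) * ∫⁻ θ, ENNReal.ofReal (G θ ^ 2) ∂μθ := by
        rw [mul_pow, ← ENNReal.rpow_natCast (_ ^ (1/(2:ℝ))), ← ENNReal.rpow_natCast (_ ^ (1/(2:ℝ)))]
        rw [← ENNReal.rpow_mul, ← ENNReal.rpow_mul]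
        norm_num

set_option maxHeartbeats 1000000 in
/-- Cauchy estimate in the analytic spaces `H^{0,ρ}`: a function holomorphic on a horizontal
strip with uniformly bounded `L²` norms on horizontal lines loses a factor `ρ'' - ρ'` when
differentiated. -/
theorem cauchy_estimate_strip :
    ∃ C : ℝ, 0 < C ∧ ∀ ρ'' ρ' N : ℝ, 0 < ρ' → ρ' < ρ'' → 0 ≤ N →
      ∀ f : ℂ → ℂ,
        DifferentiableOn ℂ f {z : ℂ | |z.im| < ρ''} →
        (∀ b : ℝ, |b| < ρ'' →
          Integrable (fun x : ℝ => ‖f (x + b * Complex.I)‖ ^ 2)) →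
        (∀ b : ℝ, |b| < ρ'' →
          (∫ x : ℝ, ‖f (x + b * Complex.I)‖ ^ 2) ≤ N ^ 2) →
        ∀ b : ℝ, |b| < ρ' →
          (∫ x : ℝ, ‖deriv f (x + b * Complex.I)‖ ^ 2) ≤ (C * N / (ρ'' - ρ')) ^ 2 := by
  refine ⟨2, two_pos, ?_⟩
  intro ρ'' ρ' N hρ' hlt hN f hf hInt hBound b hb
  set S : Set ℂ := {z : ℂ | |z.im| < ρ''} with hS_def
  have hSopen : IsOpen S := isOpen_lt (continuous_abs.comp Complex.continuous_im) continuous_const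
  set R : ℝ := (ρ'' - ρ') / 2 with hR_def
  have hR : 0 < R := by rw [hR_def]; linarith
  have hρR : ρ' + R < ρ'' := by rw [hR_def]; linarith
  -- the closed ball around points of the narrow strip is inside the wide strip
  have hmem : ∀ c : ℂ, |c.im| < ρ' → ∀ z ∈ Metric.closedBall c R, z ∈ S := by
    intro c hc z hz
    have h3 : |(z - c).im| ≤ R := by
      refine le_trans (Complex.abs_im_le_norm _) ?_
      rw [Metric.mem_closedBall, Complex.dist_eq] at hz
      exact hz
    have h4 : |z.im| ≤ |c.im| + |(z - c).im| := by
      have h5 : z.im = c.im + (z - c).im := by rw [Complex.sub_im]; ring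
      rw [h5]; exact abs_add_le _ _
    show |z.im| < ρ''
    linarith
  have hb'' : |b| < ρ'' := lt_trans hb (lt_trans (by linarith) hρR)
  have hfc : ContinuousOn f S := hf.continuousOn
  -- membership of line points
  have hline_mem : ∀ (b' : ℝ), |b'| < ρ'' → ∀ x : ℝ, ((x:ℂ) + b' * Complex.I) ∈ S := by
    intro b' hb' x
    simp only [hS_def, mem_setOf_eq, Complex.add_im, Complex.ofReal_im, Complex.mul_im,
      Complex.ofReal_re, Complex.I_im, Complex.I_re, Complex.ofReal_im, mul_zero, mul_one,
      zero_add, zero_mul, add_zero]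
    exact hb'
  have hsin : ∀ θ : ℝ, |b + R * Real.sin θ| < ρ'' := by
    intro θ
    have h1 : |R * Real.sin θ| ≤ R := by
      rw [abs_mul, abs_of_nonneg hR.le]
      nlinarith [abs_sin_le_one θ, abs_nonneg (Real.sin θ)]
    calc |b + R * Real.sin θ| ≤ |b| + |R * Real.sin θ| := abs_add_le _ _
      _ < ρ' + R := by linarith
      _ < ρ'' := hρR
  -- pointwise estimate in ℝ≥0∞
  set K : ℝ≥0∞ := ENNReal.ofReal ((2*π*R)⁻¹) ^ 2 * ENNReal.ofReal (2*π) with hK_def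
  have key : ∀ x : ℝ, ENNReal.ofReal (‖deriv f ((x:ℂ) + b * Complex.I)‖ ^ 2)
      ≤ K * ∫⁻ θ in Ioc (0:ℝ) (2*π),
          ENNReal.ofReal (‖f (circleMap ((x:ℂ) + b * Complex.I) R θ)‖ ^ 2) := by
    intro x
    set c : ℂ := (x:ℂ) + b * Complex.I with hc_def
    have hcim : |c.im| < ρ' := by
      simp only [hc_def, Complex.add_im, Complex.ofReal_im, Complex.mul_im, Complex.ofReal_re,
        Complex.I_im, Complex.I_re, mul_zero, mul_one, zero_add, zero_mul, add_zero]
      exact hb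
    have hdcl : DiffContOnCl ℂ f (Metric.ball c R) :=
      (hf.mono fun z hz => hmem c hcim z (Metric.closure_ball_subset_closedBall hz)).diffContOnCl
    have hGc : Continuous fun θ => ‖f (circleMap c R θ)‖ :=
      (hfc.comp_continuous (continuous_circleMap c R) fun θ =>
        hmem c hcim _ (Metric.sphere_subset_closedBall (circleMap_mem_sphere c hR.le θ))).norm
    have h1 := cauchy_ptwise hR hdcl
    have hAnn : 0 ≤ ∫ θ in (0:ℝ)..(2*π), ‖f (circleMap c R θ)‖ :=
      intervalIntegral.integral_nonneg (by positivity) fun u _ => norm_nonneg _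
    calc ENNReal.ofReal (‖deriv f c‖ ^ 2) = ENNReal.ofReal (‖deriv f c‖) ^ 2 :=
          ENNReal.ofReal_pow (norm_nonneg _) 2
      _ ≤ ENNReal.ofReal ((2*π*R)⁻¹ * ∫ θ in (0:ℝ)..(2*π), ‖f (circleMap c R θ)‖) ^ 2 :=
          pow_le_pow_left₀ zero_le (ENNReal.ofReal_le_ofReal h1) 2
      _ = ENNReal.ofReal ((2*π*R)⁻¹) ^ 2
            * ENNReal.ofReal (∫ θ in (0:ℝ)..(2*π), ‖f (circleMap c R θ)‖) ^ 2 := by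
          rw [ENNReal.ofReal_mul (by positivity), mul_pow]
      _ ≤ ENNReal.ofReal ((2*π*R)⁻¹) ^ 2 * (ENNReal.ofReal (2*π)
            * ∫⁻ θ in Ioc (0:ℝ) (2*π), ENNReal.ofReal (‖f (circleMap c R θ)‖ ^ 2)) :=
          mul_le_mul_right (cs_circle hGc fun θ => norm_nonneg _) _
      _ = K * ∫⁻ θ in Ioc (0:ℝ) (2*π), ENNReal.ofReal (‖f (circleMap c R θ)‖ ^ 2) := by
          rw [hK_def]; ring
  -- measurability of the derivative on the line
  have hderiv_cont : ContinuousOn (deriv f) S := ((hf.analyticOnNhd hSopen).deriv).continuousOn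
  have hline_cont : Continuous fun x : ℝ => (x:ℂ) + b * Complex.I :=
    Complex.continuous_ofReal.add continuous_const
  have hDm : AEStronglyMeasurable (fun x : ℝ => ‖deriv f ((x:ℂ) + b * Complex.I)‖ ^ 2) volume :=
    (((hderiv_cont.comp_continuous hline_cont fun x => hline_mem b hb'' x).norm).pow 2
      ).aestronglyMeasurable
  rw [integral_eq_lintegral_of_nonneg_ae (ae_of_all _ fun x => by positivity) hDm]
  refine ENNReal.toReal_le_of_le_ofReal (by positivity) ?_
  have hKne : K ≠ ⊤ :=
    ENNReal.mul_ne_top (ENNReal.pow_ne_top ENNReal.ofReal_ne_top) ENNReal.ofReal_ne_top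
  -- measurability of the two-variable function
  have hprod_cont : Continuous fun p : ℝ × ℝ =>
      ENNReal.ofReal (‖f (circleMap ((p.1:ℂ) + b * Complex.I) R p.2)‖ ^ 2) := by
    refine ENNReal.continuous_ofReal.comp ?_
    refine (Continuous.pow ?_ 2)
    refine Continuous.norm ?_
    refine hfc.comp_continuous ?_ ?_
    · simp only [circleMap]
      exact ((Complex.continuous_ofReal.comp continuous_fst).add continuous_const).add
        (continuous_const.mul (Complex.continuous_exp.comp
          ((Complex.continuous_ofReal.comp continuous_snd).mul continuous_const)))
    · intro p
      refine hmem ((p.1:ℂ) + b * Complex.I) ?_ _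
        (Metric.sphere_subset_closedBall (circleMap_mem_sphere _ hR.le p.2))
      simp only [Complex.add_im, Complex.ofReal_im, Complex.mul_im, Complex.ofReal_re,
        Complex.I_im, Complex.I_re, mul_zero, mul_one, zero_add, zero_mul, add_zero]
      exact hb
  calc ∫⁻ x : ℝ, ENNReal.ofReal (‖deriv f ((x:ℂ) + b * Complex.I)‖ ^ 2)
      ≤ ∫⁻ x : ℝ, K * ∫⁻ θ in Ioc (0:ℝ) (2*π),
          ENNReal.ofReal (‖f (circleMap ((x:ℂ) + b * Complex.I) R θ)‖ ^ 2) :=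
        lintegral_mono key
    _ = K * ∫⁻ x : ℝ, ∫⁻ θ in Ioc (0:ℝ) (2*π),
          ENNReal.ofReal (‖f (circleMap ((x:ℂ) + b * Complex.I) R θ)‖ ^ 2) :=
        lintegral_const_mul' _ _ hKne
    _ = K * ∫⁻ θ in Ioc (0:ℝ) (2*π), ∫⁻ x : ℝ,
          ENNReal.ofReal (‖f (circleMap ((x:ℂ) + b * Complex.I) R θ)‖ ^ 2) := by
        rw [lintegral_lintegral_swap hprod_cont.aemeasurable]
    _ ≤ K * ∫⁻ _θ in Ioc (0:ℝ) (2*π), ENNReal.ofReal (N ^ 2) := by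
        refine mul_le_mul_right (lintegral_mono_ae (ae_of_all _ fun θ => ?_)) _
        -- rewrite the inner integral using translation invariance
        have hpt : ∀ x : ℝ, circleMap ((x:ℂ) + b * Complex.I) R θ
            = ((x + R * Real.cos θ : ℝ) : ℂ) + ((b + R * Real.sin θ : ℝ) : ℂ) * Complex.I := by
          intro x
          simp [circleMap, Complex.exp_mul_I, Complex.ext_iff]
        have htrans : (∫⁻ x : ℝ,
            ENNReal.ofReal (‖f (circleMap ((x:ℂ) + b * Complex.I) R θ)‖ ^ 2))
            = ∫⁻ x : ℝ, ENNReal.ofReal (‖f ((x:ℂ) + (b + R * Real.sin θ : ℝ) * Complex.I)‖ ^ 2) := by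
          simp_rw [hpt]
          exact lintegral_add_right_eq_self
            (fun y : ℝ => ENNReal.ofReal (‖f ((y:ℂ) + (b + R * Real.sin θ : ℝ) * Complex.I)‖ ^ 2))
            (R * Real.cos θ)
        rw [htrans, ← ofReal_integral_eq_lintegral_ofReal (hInt _ (hsin θ))
          (ae_of_all _ fun x => by positivity)]
        exact ENNReal.ofReal_le_ofReal (hBound _ (hsin θ))
    _ = K * (ENNReal.ofReal (N ^ 2) * ENNReal.ofReal (2*π)) := by
        rw [lintegral_const, Measure.restrict_apply_univ, Real.volume_Ioc, sub_zero]
    _ ≤ ENNReal.ofReal ((2 * N / (ρ'' - ρ')) ^ 2) := by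
        rw [hK_def, ← ENNReal.ofReal_pow (by positivity), ← ENNReal.ofReal_mul (by positivity),
          ← ENNReal.ofReal_mul (by positivity), ← ENNReal.ofReal_mul (by positivity)]
        refine ENNReal.ofReal_le_ofReal (le_of_eq ?_)
        have hπ : π ≠ 0 := pi_ne_zero
        have hρ : ρ'' - ρ' ≠ 0 := by intro h; linarith [sub_pos.mpr hlt]
        rw [hR_def]
        field_simp
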